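/- Let A ∈ ℝ^{n×n}. The AVE Ax + |x| = b has a unique solution for every b ∈ ℝ^n if and only if A + D̄ is nonsingular for every diagonal matrix D̄ = diag(d̄_i) with d̄_i ∈ [−1, 1]. -/

import Mathlib

open Matrix

/-- A square real matrix is a `P`-matrix if all of its principal minors are positive. -/
def IsPMatrix {n : ℕ} (M : Matrix (Fin n) (Fin n) ℝ) : Prop :=
  ∀ s : Finset (Fin n), s.Nonempty →
    0 < (M.submatrix (fun i : s => (i : Fin n)) (fun i : s => (i : Fin n))).det

/-- The (unordered) singular values of a real square matrix: square roots of the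
eigenvalues of `Aᵀ * A`. -/
noncomputable def singVals {n : ℕ} (A : Matrix (Fin n) (Fin n) ℝ) : Fin n → ℝ :=
  fun i => Real.sqrt (((show (Aᵀ * A).IsHermitian by
    simpa [Matrix.conjTranspose_eq_transpose_of_trivial] using
      Matrix.isHermitian_conjTranspose_mul_self A)).eigenvalues i)

/-- `svalsDecr A i` is the `i`-th largest singular value of `A` (so `svalsDecr A 0 = σ₁`). -/
noncomputable def svalsDecr {n : ℕ} (A : Matrix (Fin n) (Fin n) ℝ) : Fin n → ℝ :=
  fun i => singVals A (Tuple.sort (singVals A) (Fin.rev i))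

/-- The maximal singular value `σ₁`. -/
noncomputable def maxSV {n : ℕ} (A : Matrix (Fin n) (Fin n) ℝ) : ℝ :=
  ⨆ i, singVals A i

/-- The minimal singular value `σₙ`. -/
noncomputable def minSV {n : ℕ} (A : Matrix (Fin n) (Fin n) ℝ) : ℝ :=
  ⨅ i, singVals A i

/-- The spectral radius of a real square matrix (as the spectral radius of its
complexification), valued in `ℝ≥0∞`. -/
noncomputable def specRad {n : ℕ} (A : Matrix (Fin n) (Fin n) ℝ) : ENNReal :=
  spectralRadius ℂ (A.map (Complex.ofReal))

section AVE

attribute [local instance] Matrix.linftyOpNormedRing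

variable {n : ℕ}

/-- Mean-value style slope vector for the absolute value function. -/
private lemma ave_slope (x y : Fin n → ℝ) :
    ∃ c : Fin n → ℝ, (∀ i, |c i| ≤ 1) ∧ ∀ i, |x i| - |y i| = c i * (x i - y i) := by
  refine ⟨fun i => if h : x i = y i then 0 else (|x i| - |y i|) / (x i - y i),
    fun i => ?_, fun i => ?_⟩
  · by_cases h : x i = y i
    · simp [h]
    · have hne : x i - y i ≠ 0 := sub_ne_zero.2 h
      simp only [dif_neg h]
      rw [abs_div, div_le_one (abs_pos.2 hne)]
      exact abs_abs_sub_abs_le_abs_sub _ _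
  · by_cases h : x i = y i
    · simp [h]
    · have hne : x i - y i ≠ 0 := sub_ne_zero.2 h
      simp only [dif_neg h]
      rw [div_mul_cancel₀ _ hne]

private lemma ave_norm_abs_sub_abs (x y : Fin n → ℝ) : ‖|x| - |y|‖ ≤ ‖x - y‖ := by
  refine (pi_norm_le_iff_of_nonneg (norm_nonneg _)).2 fun i => ?_
  calc ‖(|x| - |y|) i‖ = |(|x i| - |y i|)| := by
        simp [Real.norm_eq_abs]
    _ ≤ |x i - y i| := abs_abs_sub_abs_le_abs_sub _ _
    _ = ‖(x - y) i‖ := by simp [Real.norm_eq_abs]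
    _ ≤ ‖x - y‖ := norm_le_pi_norm _ i

private lemma ave_expansive (A : Matrix (Fin n) (Fin n) ℝ) {M : ℝ}
    (hM : ∀ c : Fin n → ℝ, (∀ i, |c i| ≤ 1) →
      IsUnit (A + diagonal c) ∧ ‖(A + diagonal c)⁻¹‖ ≤ M)
    {μ : ℝ} (hμ0 : 0 ≤ μ) (hμ1 : μ ≤ 1) (x y : Fin n → ℝ) :
    ‖x - y‖ ≤ M * ‖(A *ᵥ x + μ • |x|) - (A *ᵥ y + μ • |y|)‖ := by
  obtain ⟨c, hc1, hc2⟩ := ave_slope x y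
  have hc'1 : ∀ i, |(μ • c) i| ≤ 1 := fun i => by
    have : |μ * c i| = μ * |c i| := by rw [abs_mul, abs_of_nonneg hμ0]
    simp only [Pi.smul_apply, smul_eq_mul, this]
    calc μ * |c i| ≤ 1 * 1 := by
          exact mul_le_mul hμ1 (hc1 i) (abs_nonneg _) zero_le_one
      _ = 1 := one_mul 1
  have hkey : (A *ᵥ x + μ • |x|) - (A *ᵥ y + μ • |y|)
      = (A + diagonal (μ • c)) *ᵥ (x - y) := by
    have h1 : diagonal (μ • c) *ᵥ (x - y) = μ • |x| - μ • |y| := by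
      funext i
      simp only [mulVec_diagonal, Pi.sub_apply, Pi.smul_apply, Pi.abs_apply, smul_eq_mul]
      rw [mul_assoc, ← hc2 i]
      ring
    rw [add_mulVec, mulVec_sub, h1]
    abel
  obtain ⟨hu, hb⟩ := hM (μ • c) hc'1
  have hdet : IsUnit (A + diagonal (μ • c)).det := (isUnit_iff_isUnit_det _).1 hu
  have hxy : x - y = (A + diagonal (μ • c))⁻¹ *ᵥ ((A + diagonal (μ • c)) *ᵥ (x - y)) := by
    rw [mulVec_mulVec, nonsing_inv_mul _ hdet, one_mulVec]
  calc ‖x - y‖ = ‖(A + diagonal (μ • c))⁻¹ *ᵥ ((A + diagonal (μ • c)) *ᵥ (x - y))‖ := by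
        rw [← hxy]
    _ ≤ ‖(A + diagonal (μ • c))⁻¹‖ * ‖(A + diagonal (μ • c)) *ᵥ (x - y)‖ :=
        linfty_opNorm_mulVec _ _
    _ ≤ M * ‖(A + diagonal (μ • c)) *ᵥ (x - y)‖ :=
        mul_le_mul_of_nonneg_right hb (norm_nonneg _)
    _ = M * ‖(A *ᵥ x + μ • |x|) - (A *ᵥ y + μ • |y|)‖ := by rw [hkey]

private lemma ave_bound (A : Matrix (Fin n) (Fin n) ℝ)
    (hinv : ∀ d : Fin n → ℝ, (∀ i, |d i| ≤ 1) → IsUnit (A + diagonal d)) :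
    ∃ M : ℝ, 1 ≤ M ∧ ∀ c : Fin n → ℝ, (∀ i, |c i| ≤ 1) → ‖(A + diagonal c)⁻¹‖ ≤ M := by
  set K : Set (Fin n → ℝ) := Set.univ.pi fun _ => Set.Icc (-1 : ℝ) 1 with hK
  have hKc : IsCompact K := isCompact_univ_pi fun _ => isCompact_Icc
  have hmem : ∀ c : Fin n → ℝ, (∀ i, |c i| ≤ 1) ↔ c ∈ K := fun c => by
    rw [hK, Set.mem_univ_pi]
    exact forall_congr' fun i => abs_le.trans Set.mem_Icc.symm
  have hcont : ContinuousOn (fun c : Fin n → ℝ => (A + diagonal c)⁻¹) K := by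
    have heq : (fun c : Fin n → ℝ => (A + diagonal c)⁻¹)
        = fun c => Ring.inverse (A + diagonal c) := by
      funext c; rw [nonsing_inv_eq_ringInverse]
    rw [heq]
    intro c hc
    have h1 : Continuous fun c : Fin n → ℝ => A + diagonal c := by
      refine continuous_const.add ?_
      have hlip : LipschitzWith 1 (fun c : Fin n → ℝ =>
          (diagonal c : Matrix (Fin n) (Fin n) ℝ)) := by
        refine LipschitzWith.of_dist_le_mul fun a b => ?_
        rw [dist_eq_norm, dist_eq_norm, diagonal_sub, NNReal.coe_one, one_mul]
        exact le_of_eq (linfty_opNorm_diagonal _)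
      exact hlip.continuous
    have hu : IsUnit (A + diagonal c) := hinv c ((hmem c).2 hc)
    have h2 : ContinuousAt Ring.inverse (A + diagonal c) := by
      have : HasSummableGeomSeries (Matrix (Fin n) (Fin n) ℝ) :=
        @instHasSummableGeomSeriesOfCompleteSpace _ _
          (by exact (inferInstance : CompleteSpace (Fin n → Fin n → ℝ)))
      have := NormedRing.inverse_continuousAt hu.unit
      rwa [hu.unit_spec] at this
    have h3 : ContinuousAt (Ring.inverse ∘ fun c : Fin n → ℝ => A + diagonal c) c :=
      ContinuousAt.comp (f := fun c : Fin n → ℝ => A + diagonal c) (x := c) h2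
        h1.continuousAt
    exact h3.continuousWithinAt
  obtain ⟨C, hC⟩ := hKc.exists_bound_of_continuousOn hcont
  exact ⟨max C 1, le_max_right _ _,
    fun c hc => (hC c ((hmem c).1 hc)).trans (le_max_left _ _)⟩

private lemma ave_step (A : Matrix (Fin n) (Fin n) ℝ) {M : ℝ} (hM1 : 1 ≤ M)
    (hM : ∀ c : Fin n → ℝ, (∀ i, |c i| ≤ 1) →
      IsUnit (A + diagonal c) ∧ ‖(A + diagonal c)⁻¹‖ ≤ M)
    {μ μ' : ℝ} (hμ : μ ∈ Set.Icc (0 : ℝ) 1) (hμ' : μ' ∈ Set.Icc (0 : ℝ) 1)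
    (hstep : |μ' - μ| * M ≤ 1 / 2)
    (hs : ∀ b, ∃ x, A *ᵥ x + μ • |x| = b) (b : Fin n → ℝ) :
    ∃ x, A *ᵥ x + μ' • |x| = b := by
  set S : (Fin n → ℝ) → (Fin n → ℝ) :=
    fun x => Classical.choose (hs (b + (μ - μ') • |x|)) with hSdef
  have hSspec : ∀ x, A *ᵥ S x + μ • |S x| = b + (μ - μ') • |x| :=
    fun x => Classical.choose_spec (hs (b + (μ - μ') • |x|))
  have hlip : LipschitzWith (1/2 : NNReal) S := by
    refine LipschitzWith.of_dist_le_mul fun x y => ?_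
    rw [dist_eq_norm, dist_eq_norm]
    have h1 : ‖S x - S y‖ ≤ M * ‖(b + (μ - μ') • |x|) - (b + (μ - μ') • |y|)‖ := by
      have := ave_expansive A hM hμ.1 hμ.2 (S x) (S y)
      rwa [hSspec x, hSspec y] at this
    have h2 : (b + (μ - μ') • |x|) - (b + (μ - μ') • |y|) = (μ - μ') • (|x| - |y|) := by
      rw [smul_sub]; abel
    rw [h2] at h1
    have hM0 : (0 : ℝ) ≤ M := le_trans zero_le_one hM1
    calc ‖S x - S y‖ ≤ M * ‖(μ - μ') • (|x| - |y|)‖ := h1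
      _ = M * (|μ - μ'| * ‖|x| - |y|‖) := by rw [norm_smul, Real.norm_eq_abs]
      _ ≤ M * (|μ - μ'| * ‖x - y‖) :=
          mul_le_mul_of_nonneg_left
            (mul_le_mul_of_nonneg_left (ave_norm_abs_sub_abs x y) (abs_nonneg _)) hM0
      _ ≤ (1/2) * ‖x - y‖ := by
          have h3 : |μ - μ'| * M ≤ 1/2 := by rwa [abs_sub_comm] at hstep
          nlinarith [norm_nonneg (x - y), abs_nonneg (μ - μ')]
      _ = ((1/2 : NNReal) : ℝ) * ‖x - y‖ := by norm_num
  have hhalf : (1/2 : NNReal) < 1 := by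
    rw [← NNReal.coe_lt_coe]; norm_num
  have hcon : ContractingWith (1/2) S := ⟨hhalf, hlip⟩
  obtain ⟨x₀, hfix, -⟩ := hcon.exists_fixedPoint (0 : Fin n → ℝ) (edist_ne_top _ _)
  refine ⟨x₀, ?_⟩
  have h := hSspec x₀
  rw [show S x₀ = x₀ from hfix] at h
  calc A *ᵥ x₀ + μ' • |x₀| = (A *ᵥ x₀ + μ • |x₀|) + (μ' - μ) • |x₀| := by
        rw [sub_smul]; abel
    _ = b + (μ - μ') • |x₀| + (μ' - μ) • |x₀| := by rw [h]
    _ = b := by rw [add_assoc, ← add_smul]; simp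

theorem stmt7 {n : ℕ} (A : Matrix (Fin n) (Fin n) ℝ) :
    (∀ b : Fin n → ℝ, ∃! x : Fin n → ℝ, A *ᵥ x + |x| = b) ↔
      ∀ d : Fin n → ℝ, (∀ i, d i ∈ Set.Icc (-1 : ℝ) 1) →
        IsUnit (A + Matrix.diagonal d) := by
  have habs : ∀ d : Fin n → ℝ, (∀ i, d i ∈ Set.Icc (-1 : ℝ) 1) ↔ (∀ i, |d i| ≤ 1) :=
    fun d => forall_congr' fun i => by rw [Set.mem_Icc, abs_le]
  constructor
  · -- necessity
    intro huniq d hd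
    by_contra hnu
    have hdet : (A + diagonal d).det = 0 := by
      by_contra h
      exact hnu ((isUnit_iff_isUnit_det _).2 (Ne.isUnit h))
    obtain ⟨x, hx0, hker⟩ := (Matrix.exists_mulVec_eq_zero_iff).2 hdet
    set x₁ : Fin n → ℝ := fun i => (x i + d i * |x i|) / 2 with hx₁
    set x₂ : Fin n → ℝ := fun i => (d i * |x i| - x i) / 2 with hx₂
    have hsub : x₁ - x₂ = x := by
      funext i; simp only [Pi.sub_apply, hx₁, hx₂]; ring
    have habs1 : ∀ i, |x₁ i| = (|x i| + d i * x i) / 2 := by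
      intro i
      have hdi := hd i; rw [Set.mem_Icc] at hdi
      simp only [hx₁]
      rw [abs_div, abs_two]
      congr 1
      rcases le_total 0 (x i) with h | h
      · rw [abs_of_nonneg h, abs_of_nonneg (by nlinarith : (0:ℝ) ≤ x i + d i * x i)]
      · rw [abs_of_nonpos h, abs_of_nonpos (by nlinarith : x i + d i * -x i ≤ 0)]; ring
    have habs2 : ∀ i, |x₂ i| = (|x i| - d i * x i) / 2 := by
      intro i
      have hdi := hd i; rw [Set.mem_Icc] at hdi
      simp only [hx₂]
      rw [abs_div, abs_two]
      congr 1
      rcases le_total 0 (x i) with h | h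
      · rw [abs_of_nonneg h, abs_of_nonpos (by nlinarith : d i * x i - x i ≤ 0)]; ring
      · rw [abs_of_nonpos h, abs_of_nonneg (by nlinarith : (0:ℝ) ≤ d i * -x i - x i)]; ring
    have hAx : A *ᵥ x = -(diagonal d *ᵥ x) := by
      have h0 : A *ᵥ x + diagonal d *ᵥ x = 0 := by
        rw [← add_mulVec]; exact hker
      exact eq_neg_of_add_eq_zero_left h0
    have hb : A *ᵥ x₁ + |x₁| = A *ᵥ x₂ + |x₂| := by
      funext i
      have h3 : (A *ᵥ x₁) i - (A *ᵥ x₂) i = (A *ᵥ x) i := by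
        rw [← hsub, mulVec_sub]; rfl
      have h4 : (A *ᵥ x) i = -(d i * x i) := by
        rw [hAx]; simp [mulVec_diagonal]
      rw [h4] at h3
      simp only [Pi.add_apply, Pi.abs_apply]
      rw [habs1 i, habs2 i]
      linarith
    have hne : x₁ ≠ x₂ := fun hcc => hx0 (by rw [← hsub, hcc, sub_self])
    obtain ⟨w, -, huni⟩ := huniq (A *ᵥ x₁ + |x₁|)
    exact hne ((huni x₁ rfl).trans (huni x₂ hb.symm).symm)
  · -- sufficiency
    intro hinv' b
    have hinv : ∀ d : Fin n → ℝ, (∀ i, |d i| ≤ 1) → IsUnit (A + diagonal d) :=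
      fun d hd => hinv' d ((habs d).2 hd)
    obtain ⟨M, hM1, hMb⟩ := ave_bound A hinv
    have hM : ∀ c : Fin n → ℝ, (∀ i, |c i| ≤ 1) →
        IsUnit (A + diagonal c) ∧ ‖(A + diagonal c)⁻¹‖ ≤ M :=
      fun c hc => ⟨hinv c hc, hMb c hc⟩
    have hM0 : (0 : ℝ) < M := lt_of_lt_of_le zero_lt_one hM1
    have h2M : (0 : ℝ) < 2 * M := by linarith
    have hind : ∀ k : ℕ, ∀ μ : ℝ, μ ∈ Set.Icc (0 : ℝ) 1 → μ * (2 * M) ≤ k →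
        ∀ b, ∃ x, A *ᵥ x + μ • |x| = b := by
      intro k
      induction k with
      | zero =>
        intro μ hμ hk b'
        push_cast at hk
        have hμ0 : μ = 0 := le_antisymm (by nlinarith [hμ.1]) hμ.1
        subst hμ0
        have hA : IsUnit (A + diagonal (0 : Fin n → ℝ)) := hinv 0 (by simp)
        rw [show (0 : Fin n → ℝ) = (fun _ => (0 : ℝ)) from rfl, diagonal_zero,
          add_zero] at hA
        refine ⟨A⁻¹ *ᵥ b', ?_⟩
        rw [zero_smul, add_zero, mulVec_mulVec,
          mul_nonsing_inv _ ((isUnit_iff_isUnit_det _).1 hA), one_mulVec]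
      | succ k ih =>
        intro μ hμ hk b'
        push_cast at hk
        set μ₁ : ℝ := min μ ((k : ℝ) / (2 * M)) with hμ₁def
        have hμ₁mem : μ₁ ∈ Set.Icc (0 : ℝ) 1 :=
          ⟨le_min hμ.1 (div_nonneg (Nat.cast_nonneg k) h2M.le),
            le_trans (min_le_left _ _) hμ.2⟩
        have hμ₁k : μ₁ * (2 * M) ≤ k := by
          calc μ₁ * (2 * M) ≤ ((k : ℝ) / (2 * M)) * (2 * M) :=
                mul_le_mul_of_nonneg_right (min_le_right _ _) h2M.le
            _ = k := div_mul_cancel₀ _ (ne_of_gt h2M)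
        have hdiff : |μ - μ₁| * M ≤ 1 / 2 := by
          have h0 : μ₁ ≤ μ := min_le_left _ _
          rw [abs_of_nonneg (sub_nonneg.2 h0)]
          have h1 : μ - μ₁ ≤ 1 / (2 * M) := by
            rcases le_total μ ((k : ℝ) / (2 * M)) with h | h
            · rw [hμ₁def, min_eq_left h]
              simp only [sub_self]
              positivity
            · rw [hμ₁def, min_eq_right h]
              have hμle : μ ≤ ((k : ℝ) + 1) / (2 * M) := (le_div_iff₀ h2M).2 hk
              have : ((k : ℝ) + 1) / (2 * M) - (k : ℝ) / (2 * M) = 1 / (2 * M) := by ring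
              linarith
          calc (μ - μ₁) * M ≤ (1 / (2 * M)) * M :=
                mul_le_mul_of_nonneg_right h1 hM0.le
            _ = 1 / 2 := by field_simp
        exact ave_step A hM1 hM hμ₁mem hμ hdiff (ih μ₁ hμ₁mem hμ₁k) b'
    obtain ⟨k, hk⟩ := exists_nat_ge (2 * M)
    obtain ⟨x, hx⟩ := hind k 1 ⟨zero_le_one, le_refl 1⟩ (by rw [one_mul]; exact hk) b
    rw [one_smul] at hx
    refine ⟨x, hx, fun y hy => ?_⟩
    have hexp := ave_expansive A hM zero_le_one le_rfl y x
    rw [one_smul, one_smul, hy, hx, sub_self, norm_zero, mul_zero] at hexp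
    have h0 : y - x = 0 := by rwa [← norm_le_zero_iff]
    exact sub_eq_zero.1 h0

end AVE
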